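/- Fix s ≠ t in {1,…,N}, a real symmetric positive definite N×N matrix Θ with Θ(s,s) ≥ 0, Θ(t,t) ≥ 0, Θ(s,t) = Θ(t,s) ≤ 0, an N×M real matrix X, and constants M > 0, β ∈ ℝ. Define the objective along the edge-weight direction by F(c) = log det(Θ + c·e_{s,t}e_{s,t}^T) − (1/M)·Tr(X^T (Θ + c·e_{s,t}e_{s,t}^T) X) − β·‖Θ + c·e_{s,t}e_{s,t}^T‖₁. Then F has a right derivative at c = 0 equal to e_{s,t}^T Θ^{-1} e_{s,t} − (1/M)‖X^T e_{s,t}‖₂² − 4β. -/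

import Mathlib

open Matrix

/-- `eVec N s t` is the vector `e_{s,t} = e_s - e_t` in `ℝ^N`. -/
def eVec (N : ℕ) (s t : Fin N) : Fin N → ℝ :=
  Pi.single s 1 - Pi.single t 1

/-- **Gradient of the graphical-Lasso objective along an edge-weight direction.**
For `s ≠ t`, a symmetric positive definite `Θ` with `Θ(s,s) ≥ 0`, `Θ(t,t) ≥ 0`,
`Θ(s,t) = Θ(t,s) ≤ 0`, an `N×M` matrix `X` with `M > 0`, and `β ∈ ℝ`, the objective
`F(c) = log det(Θ + c·e e ᵀ) − (1/M)·Tr(Xᵀ(Θ + c·e e ᵀ)X) − β·‖Θ + c·e e ᵀ‖₁`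
(with `e = e_{s,t}`) has right derivative at `c = 0` equal to
`eᵀ Θ⁻¹ e − (1/M)‖Xᵀ e‖₂² − 4β`. -/
theorem objective_right_derivative (N M : ℕ) (hM : 0 < M)
    (s t : Fin N) (hst : s ≠ t) (Θ : Matrix (Fin N) (Fin N) ℝ)
    (hsym : Θ.IsSymm) (hpd : Θ.PosDef)
    (hss : 0 ≤ Θ s s) (htt : 0 ≤ Θ t t) (hsymst : Θ s t = Θ t s) (hneg : Θ s t ≤ 0)
    (X : Matrix (Fin N) (Fin M) ℝ) (β : ℝ) :
    HasDerivWithinAt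
      (fun c : ℝ =>
        Real.log (Θ + c • vecMulVec (eVec N s t) (eVec N s t)).det
          - (1 / (M : ℝ)) * (Xᵀ * (Θ + c • vecMulVec (eVec N s t) (eVec N s t)) * X).trace
          - β * ∑ i, ∑ j, |(Θ + c • vecMulVec (eVec N s t) (eVec N s t)) i j|)
      (eVec N s t ⬝ᵥ Θ⁻¹.mulVec (eVec N s t)
        - (1 / (M : ℝ)) * ∑ i, (Xᵀ.mulVec (eVec N s t) i) ^ 2 - 4 * β)
      (Set.Ici 0) 0 := by
  set e := eVec N s t with he
  set q : ℝ := e ⬝ᵥ Θ⁻¹.mulVec e with hq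
  set T1 : ℝ := ∑ i, (Xᵀ.mulVec e i) ^ 2 with hT1
  set T0 : ℝ := (Xᵀ * Θ * X).trace with hT0
  set S : ℝ := ∑ i, ∑ j, |Θ i j| with hS
  have hdet0 : Θ.det ≠ 0 := hpd.det_pos.ne'
  -- determinant identity
  have hdet : ∀ c : ℝ, (Θ + c • vecMulVec e e).det = Θ.det * (1 + c * q) := by
    intro c
    have hinv : Θ * Θ⁻¹ = 1 := Θ.mul_nonsing_inv (isUnit_iff_ne_zero.mpr hdet0)
    have hsm : c • vecMulVec e e = vecMulVec (c • e) e := by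
      ext i j; simp [vecMulVec]; ring
    have h1 : Θ + c • vecMulVec e e = Θ * (1 + Θ⁻¹ * vecMulVec (c • e) e) := by
      rw [Matrix.mul_add, Matrix.mul_one, ← Matrix.mul_assoc, hinv, Matrix.one_mul, hsm]
    rw [h1, det_mul, vecMulVec_eq Unit, ← Matrix.mul_assoc, ← replicateCol_mulVec,
      det_one_add_replicateCol_mul_replicateRow, mulVec_smul, dotProduct_smul, smul_eq_mul]
  -- trace identity
  have htr : ∀ c : ℝ, (Xᵀ * (Θ + c • vecMulVec e e) * X).trace = T0 + c * T1 := by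
    intro c
    have h1 : Xᵀ * (Θ + c • vecMulVec e e) * X
        = Xᵀ * Θ * X + c • (Xᵀ * vecMulVec e e * X) := by
      rw [Matrix.mul_add, Matrix.add_mul, Matrix.mul_smul, Matrix.smul_mul]
    rw [h1, trace_add, trace_smul, smul_eq_mul]
    congr 1
    congr 1
    rw [vecMulVec_eq Unit, ← Matrix.mul_assoc, ← replicateCol_mulVec,
      Matrix.mul_assoc, ← replicateRow_vecMul, trace_replicateCol_mul_replicateRow, ← mulVec_transpose]
    simp [hT1, dotProduct, sq]
  -- entrywise absolute-value identity on `c ≥ 0`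
  have hev : ∀ i, e i = (if i = s then (1:ℝ) else 0) - (if i = t then 1 else 0) := by
    intro i
    simp [he, eVec, Pi.single_apply]
  have habs : ∀ i, |e i| = (if i = s then (1:ℝ) else 0) + (if i = t then 1 else 0) := by
    intro i
    rw [hev i]
    by_cases h1 : i = s <;> by_cases h2 : i = t
    · exact absurd (h1.symm.trans h2) hst
    all_goals simp [h1, h2, hst, Ne.symm hst]
  have hts : Θ t s ≤ 0 := hsymst ▸ hneg
  have habssum : ∀ c : ℝ, 0 ≤ c →
      ∑ i, ∑ j, |(Θ + c • vecMulVec e e) i j| = S + 4 * c := by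
    intro c hc
    have key : ∀ i j, |(Θ + c • vecMulVec e e) i j| = |Θ i j| + c * (|e i| * |e j|) := by
      intro i j
      simp only [Matrix.add_apply, Matrix.smul_apply, vecMulVec_apply, smul_eq_mul]
      rw [hev i, hev j]
      by_cases hi : i = s <;> by_cases hit : i = t <;>
        by_cases hj : j = s <;> by_cases hjt : j = t
      all_goals try exact absurd (hi.symm.trans hit) hst
      all_goals try exact absurd (hj.symm.trans hjt) hst
      · simp [hi, hit, hj, hjt, hst]
        rw [abs_of_nonneg (by linarith), abs_of_nonneg hss]
      · simp [hi, hit, hj, hjt, hst, Ne.symm hst]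
        rw [show Θ s t + -c = Θ s t - c by ring,
          abs_of_nonpos (by linarith), abs_of_nonpos hneg]
        ring
      · simp [hi, hj, hjt, hst]
      · simp [hi, hit, hj, hjt, hst, Ne.symm hst]
        rw [show Θ t s + -c = Θ t s - c by ring,
          abs_of_nonpos (by linarith), abs_of_nonpos hts]
        ring
      · simp [hi, hit, hj, hjt, Ne.symm hst]
        rw [abs_of_nonneg (by linarith), abs_of_nonneg htt]
      · simp [hit, hj, hjt, Ne.symm hst]
      · simp [hi, hit, hj]
      · simp [hi, hit, hjt]
      · simp [hi, hit, hj, hjt]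
    calc ∑ i, ∑ j, |(Θ + c • vecMulVec e e) i j|
        = ∑ i, ∑ j, (|Θ i j| + c * (|e i| * |e j|)) := by
          simp only [key]
      _ = S + c * ((∑ i, |e i|) * (∑ j, |e j|)) := by
          simp only [Finset.sum_add_distrib]
          congr 1
          rw [Finset.sum_mul_sum]
          simp [Finset.mul_sum]
      _ = S + 4 * c := by
          have hsum : ∑ i, |e i| = 2 := by
            simp only [habs]
            rw [Finset.sum_add_distrib]
            simp [Finset.sum_ite_eq']
            norm_num
          rw [hsum]; ring
  -- the smooth model function
  have hD : HasDerivAt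
      (fun c : ℝ => Real.log (Θ.det * (1 + c * q)) - (1 / (M : ℝ)) * (T0 + c * T1)
        - β * (S + 4 * c)) (q - (1 / (M : ℝ)) * T1 - 4 * β) 0 := by
    have h1 : HasDerivAt (fun c : ℝ => Θ.det * (1 + c * q)) (Θ.det * q) 0 := by
      have : HasDerivAt (fun c : ℝ => 1 + c * q) q 0 := by
        simpa using ((hasDerivAt_id (0:ℝ)).mul_const q).const_add 1
      simpa using this.const_mul Θ.det
    have hne : Θ.det * (1 + 0 * q) ≠ 0 := by simpa using hdet0
    have hlog : HasDerivAt (fun c : ℝ => Real.log (Θ.det * (1 + c * q))) q 0 := by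
      have := (Real.hasDerivAt_log hne).comp 0 h1
      exact this.congr_deriv (by rw [zero_mul, add_zero, mul_one]; exact inv_mul_cancel_left₀ hdet0 q)
    have h2 : HasDerivAt (fun c : ℝ => (1 / (M : ℝ)) * (T0 + c * T1))
        ((1 / (M : ℝ)) * T1) 0 := by
      have : HasDerivAt (fun c : ℝ => T0 + c * T1) T1 0 := by
        simpa using ((hasDerivAt_id (0:ℝ)).mul_const T1).const_add T0
      simpa using this.const_mul (1 / (M : ℝ))
    have h3 : HasDerivAt (fun c : ℝ => β * (S + 4 * c)) (4 * β) 0 := by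
      have : HasDerivAt (fun c : ℝ => S + 4 * c) 4 0 := by
        simpa using ((hasDerivAt_id (0:ℝ)).const_mul (4:ℝ)).const_add S
      have := this.const_mul β
      exact this.congr_deriv (mul_comm _ _)
    exact (hlog.sub h2).sub h3
  refine (hD.hasDerivWithinAt).congr ?_ ?_
  · intro y hy
    rw [hdet y, htr y, habssum y hy]
  · rw [hdet 0, htr 0, habssum 0 le_rfl]
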